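/- arXiv:1606.03131 — 5 statements merged into one kernel-verified Lean document; each statement's English description precedes it below -/
import Mathlib

section
/- The Gauss measure m, defined by m(E) = (1/log 2) ∫_E dx/(1+x) for measurable E ⊆ (0,1), is invariant under the Gauss map α(x) = {1/x}: for every measurable set E ⊆ (0,1), m(α⁻¹(E)) = m(E). -/
open MeasureTheory

/-- The Gauss map `α(x) = {1/x}`. -/
noncomputable def gaussMap (x : ℝ) : ℝ := Int.fract x⁻¹

/-- The Gauss measure `m(E) = (1/log 2) ∫_E dx/(1+x)` for `E ⊆ (0,1)`. -/
noncomputable def gaussMeasure (E : Set ℝ) : ℝ :=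
  (Real.log 2)⁻¹ * ∫ x in E, (1 + x)⁻¹

/-- The `n`-th piece of the preimage of `E` under the Gauss map. -/
def gaussPiece (E : Set ℝ) (n : ℕ) : Set ℝ := {x : ℝ | 0 < x ∧ x⁻¹ - ((n:ℝ)+1) ∈ E}

section aux

variable {E : Set ℝ} (hE : MeasurableSet E) (hE1 : E ⊆ Set.Ioo (0:ℝ) 1)

lemma gaussPiece_eq_image (hE1 : E ⊆ Set.Ioo (0:ℝ) 1) (n : ℕ) :
    gaussPiece E n = (fun y : ℝ => ((n:ℝ)+1+y)⁻¹) '' E := by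
  ext x
  constructor
  · rintro ⟨hx, hy⟩
    refine ⟨x⁻¹ - ((n:ℝ)+1), hy, ?_⟩
    show ((n:ℝ)+1+(x⁻¹ - ((n:ℝ)+1)))⁻¹ = x
    have h : (n:ℝ)+1+(x⁻¹ - ((n:ℝ)+1)) = x⁻¹ := by ring
    rw [h, inv_inv]
  · rintro ⟨y, hyE, rfl⟩
    obtain ⟨hy0, _⟩ := hE1 hyE
    have hc : (0:ℝ) < (n:ℝ)+1+y := by positivity
    refine ⟨by positivity, ?_⟩
    rw [inv_inv]
    simpa using hyE

lemma gaussPiece_measurableSet (hE : MeasurableSet E) (n : ℕ) :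
    MeasurableSet (gaussPiece E n) := by
  have : gaussPiece E n = Set.Ioi (0:ℝ) ∩ (fun x : ℝ => x⁻¹ - ((n:ℝ)+1)) ⁻¹' E := by
    ext x; simp [gaussPiece, and_comm]
  rw [this]
  exact measurableSet_Ioi.inter ((measurable_inv.sub measurable_const) hE)

lemma gaussPiece_subset (hE1 : E ⊆ Set.Ioo (0:ℝ) 1) (n : ℕ) :
    gaussPiece E n ⊆ Set.Ioo (0:ℝ) 1 := by
  rintro x ⟨hx, hy⟩
  obtain ⟨h1, h2⟩ := hE1 hy
  have hinv : 1 < x⁻¹ := by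
    have : ((n:ℝ)+1) ≤ (n:ℝ)+1 := le_refl _
    have hn : (0:ℝ) ≤ (n:ℝ) := Nat.cast_nonneg n
    nlinarith
  have hx1 : x < 1 := by
    nlinarith [mul_inv_cancel₀ (ne_of_gt hx)]
  exact ⟨hx, hx1⟩

lemma gaussPiece_disjoint (hE1 : E ⊆ Set.Ioo (0:ℝ) 1) :
    Pairwise (Function.onFun Disjoint (gaussPiece E)) := by
  intro n m hnm
  rw [Function.onFun, Set.disjoint_left]
  rintro x ⟨hx, hn⟩ ⟨_, hm⟩
  obtain ⟨hn1, hn2⟩ := hE1 hn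
  obtain ⟨hm1, hm2⟩ := hE1 hm
  have : (n:ℝ) = (m:ℝ) := by
    have h1 : (n:ℝ) < (m:ℝ) + 1 := by nlinarith
    have h2 : (m:ℝ) < (n:ℝ) + 1 := by nlinarith
    have : n < m + 1 := by exact_mod_cast h1
    have : m < n + 1 := by exact_mod_cast h2
    norm_cast
    omega
  exact hnm (by exact_mod_cast this)

lemma gauss_preimage_eq (hE1 : E ⊆ Set.Ioo (0:ℝ) 1) :
    gaussMap ⁻¹' E ∩ Set.Ioo (0:ℝ) 1 = ⋃ n : ℕ, gaussPiece E n := by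
  ext x
  constructor
  · rintro ⟨hxE, hx0, hx1⟩
    have hinv : 1 < x⁻¹ := (one_lt_inv₀ hx0).mpr hx1
    have hfl : 1 ≤ ⌊x⁻¹⌋ := by
      have := Int.lt_floor_add_one x⁻¹
      have h2 := Int.floor_le x⁻¹
      by_contra h
      push_neg at h
      have : (⌊x⁻¹⌋ : ℝ) ≤ 0 := by exact_mod_cast Int.lt_add_one_iff.mp h
      have := Int.lt_floor_add_one x⁻¹
      linarith
    refine Set.mem_iUnion.mpr ⟨(⌊x⁻¹⌋ - 1).toNat, hx0, ?_⟩
    have hcast : (((⌊x⁻¹⌋ - 1).toNat : ℤ) : ℝ) = (⌊x⁻¹⌋ : ℝ) - 1 := by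
      rw [Int.toNat_of_nonneg (by omega)]
      push_cast; ring
    have : x⁻¹ - (((⌊x⁻¹⌋ - 1).toNat : ℝ) + 1) = Int.fract x⁻¹ := by
      have : ((((⌊x⁻¹⌋ - 1).toNat : ℕ) : ℝ)) = (⌊x⁻¹⌋ : ℝ) - 1 := by exact_mod_cast hcast
      rw [this, Int.fract]
      ring
    rw [this]
    exact hxE
  · intro hx
    obtain ⟨n, hx0, hy⟩ := Set.mem_iUnion.mp hx
    obtain ⟨hy0, hy1⟩ := hE1 hy
    have hmem : x ∈ Set.Ioo (0:ℝ) 1 := gaussPiece_subset hE1 n ⟨hx0, hy⟩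
    refine ⟨?_, hmem⟩
    show Int.fract x⁻¹ ∈ E
    have hfr : Int.fract x⁻¹ = x⁻¹ - ((n:ℝ)+1) := by
      have : x⁻¹ = (x⁻¹ - ((n:ℝ)+1)) + (((n:ℕ):ℤ) + 1 : ℤ) := by push_cast; ring
      rw [this, Int.fract_add_intCast, Int.fract_eq_self.mpr ⟨le_of_lt hy0, hy1⟩]
      push_cast; ring
    rw [hfr]
    exact hy

/-- The basic integrals. -/
noncomputable def gaussInt (E : Set ℝ) (n : ℕ) : ℝ := ∫ y in E, ((n:ℝ)+1+y)⁻¹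

lemma gaussInt_integrable (hE1 : E ⊆ Set.Ioo (0:ℝ) 1) (c : ℝ) (hc : 1 ≤ c) :
    IntegrableOn (fun y : ℝ => (c+y)⁻¹) E := by
  have hcont : ContinuousOn (fun y : ℝ => (c+y)⁻¹) (Set.Icc 0 1) := by
    apply ContinuousOn.inv₀ (by fun_prop)
    intro y hy
    have := hy.1
    positivity
  exact (hcont.integrableOn_Icc).mono_set (hE1.trans Set.Ioo_subset_Icc_self)

lemma integral_gaussPiece (hE : MeasurableSet E) (hE1 : E ⊆ Set.Ioo (0:ℝ) 1) (n : ℕ) :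
    ∫ x in gaussPiece E n, (1+x)⁻¹ = gaussInt E n - gaussInt E (n+1) := by
  set c : ℝ := (n:ℝ) + 1 with hc
  have hc1 : (1:ℝ) ≤ c := by rw [hc]; have := Nat.cast_nonneg (α := ℝ) n; linarith
  rw [gaussPiece_eq_image hE1 n]
  have hderiv : ∀ y ∈ E, HasDerivWithinAt (fun y : ℝ => (c+y)⁻¹)
      (-(((c+y)^2)⁻¹)) E y := by
    intro y hyE
    obtain ⟨hy0, _⟩ := hE1 hyE
    have hne : c + y ≠ 0 := by positivity
    have h1 : HasDerivAt (fun y : ℝ => c + y) 1 y := by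
      simpa using (hasDerivAt_id y).const_add c
    have := h1.inv hne
    have heq : -1 / (c+y)^2 = -(((c+y)^2)⁻¹) := by ring
    rw [heq] at this
    exact this.hasDerivWithinAt
  have hinj : Set.InjOn (fun y : ℝ => (c+y)⁻¹) E := by
    intro a _ b _ hab
    simp only at hab
    have := inv_injective hab
    linarith
  rw [MeasureTheory.integral_image_eq_integral_abs_deriv_smul hE hderiv hinj]
  have heq : ∀ y ∈ E, |(-(((c+y)^2)⁻¹))| • (1 + (c+y)⁻¹)⁻¹
      = (c+y)⁻¹ - (c+1+y)⁻¹ := by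
    intro y hyE
    obtain ⟨hy0, _⟩ := hE1 hyE
    have h1 : (0:ℝ) < c + y := by positivity
    rw [abs_neg, abs_of_pos (by positivity), smul_eq_mul]
    field_simp
    ring
  rw [MeasureTheory.setIntegral_congr_fun hE heq]
  have h1 := gaussInt_integrable hE1 c hc1
  have h2 := gaussInt_integrable hE1 (c+1) (by linarith)
  rw [MeasureTheory.integral_sub h1 h2]
  have e2 : ((n+1:ℕ):ℝ) + 1 = c + 1 := by push_cast [hc]; ring
  simp only [gaussInt, e2]; rfl

lemma gaussInt_nonneg (hE : MeasurableSet E) (hE1 : E ⊆ Set.Ioo (0:ℝ) 1) (n : ℕ) :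
    0 ≤ gaussInt E n := by
  apply MeasureTheory.setIntegral_nonneg hE
  intro y hy
  obtain ⟨hy0, _⟩ := hE1 hy
  positivity

lemma gaussInt_antitone (hE : MeasurableSet E) (hE1 : E ⊆ Set.Ioo (0:ℝ) 1) (n : ℕ) :
    gaussInt E (n+1) ≤ gaussInt E n := by
  apply MeasureTheory.setIntegral_mono_on
    (gaussInt_integrable hE1 _ (by push_cast; linarith [Nat.cast_nonneg (α := ℝ) n]))
    (gaussInt_integrable hE1 _ (by push_cast; linarith [Nat.cast_nonneg (α := ℝ) n])) hE
  intro y hy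
  obtain ⟨hy0, _⟩ := hE1 hy
  have : (0:ℝ) < (n:ℝ) + 1 + y := by positivity
  apply inv_anti₀ this
  push_cast; linarith

lemma gaussInt_tendsto (hE : MeasurableSet E) (hE1 : E ⊆ Set.Ioo (0:ℝ) 1) :
    Filter.Tendsto (gaussInt E) Filter.atTop (nhds 0) := by
  have hbound : ∀ n : ℕ, gaussInt E n ≤ (volume E).toReal * ((n:ℝ)+1)⁻¹ := by
    intro n
    have h1 := gaussInt_integrable hE1 ((n:ℝ)+1) (by push_cast; linarith [Nat.cast_nonneg (α := ℝ) n])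
    have h2 : IntegrableOn (fun _ : ℝ => ((n:ℝ)+1)⁻¹) E := by
      apply (integrableOn_const_iff (C := ((n:ℝ)+1)⁻¹)).mpr
      right
      exact lt_of_le_of_lt (measure_mono (hE1.trans Set.Ioo_subset_Icc_self))
        (by simp)
    calc gaussInt E n ≤ ∫ _ in E, ((n:ℝ)+1)⁻¹ := by
          apply MeasureTheory.setIntegral_mono_on h1 h2 hE
          intro y hy
          obtain ⟨hy0, _⟩ := hE1 hy
          apply inv_anti₀ (by positivity)
          linarith
      _ = (volume E).toReal * ((n:ℝ)+1)⁻¹ := by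
          rw [MeasureTheory.setIntegral_const]; simp [smul_eq_mul]; exact Or.inl rfl
  have hlim : Filter.Tendsto (fun n : ℕ => (volume E).toReal * ((n:ℝ)+1)⁻¹)
      Filter.atTop (nhds 0) := by
    have := tendsto_one_div_add_atTop_nhds_zero_nat (𝕜 := ℝ)
    have h := this.const_mul (volume E).toReal
    simpa [one_div, mul_zero] using h
  apply squeeze_zero (fun n => gaussInt_nonneg hE hE1 n) hbound hlim

lemma nonneg_nonneg (hE : MeasurableSet E) (hE1 : E ⊆ Set.Ioo (0:ℝ) 1) (n : ℕ) :
    0 ≤ gaussInt E n - gaussInt E (n+1) :=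
  sub_nonneg.mpr (gaussInt_antitone hE hE1 n)

lemma tsum_gaussInt (hE : MeasurableSet E) (hE1 : E ⊆ Set.Ioo (0:ℝ) 1) :
    ∑' n : ℕ, (gaussInt E n - gaussInt E (n+1)) = gaussInt E 0 := by
  have hsum : HasSum (fun n : ℕ => gaussInt E n - gaussInt E (n+1)) (gaussInt E 0) := by
    rw [hasSum_iff_tendsto_nat_of_nonneg (nonneg_nonneg hE hE1)]
    have hps : ∀ N : ℕ, ∑ i ∈ Finset.range N, (gaussInt E i - gaussInt E (i+1))
        = gaussInt E 0 - gaussInt E N := by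
      intro N
      exact Finset.sum_range_sub' (gaussInt E) N
    simp only [hps]
    have := (gaussInt_tendsto hE hE1).const_sub (gaussInt E 0)
    simpa using this
  exact hsum.tsum_eq

end aux

/-- The Gauss measure is invariant under the Gauss map: for every measurable
`E ⊆ (0,1)`, `m(α⁻¹(E)) = m(E)` (preimage taken within `(0,1)`). -/
theorem gaussMeasure_invariant (E : Set ℝ) (hE : MeasurableSet E)
    (hE1 : E ⊆ Set.Ioo (0:ℝ) 1) :
    gaussMeasure (gaussMap ⁻¹' E ∩ Set.Ioo (0:ℝ) 1) = gaussMeasure E := by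
  unfold gaussMeasure
  congr 1
  rw [gauss_preimage_eq hE1]
  have hInt : IntegrableOn (fun x : ℝ => (1+x)⁻¹) (⋃ n : ℕ, gaussPiece E n) := by
    have hcont : ContinuousOn (fun x : ℝ => (1+x)⁻¹) (Set.Icc 0 1) := by
      apply ContinuousOn.inv₀ (by fun_prop)
      intro y hy
      have := hy.1
      positivity
    apply (hcont.integrableOn_Icc).mono_set
    exact (Set.iUnion_subset fun n => gaussPiece_subset hE1 n).trans Set.Ioo_subset_Icc_self
  rw [MeasureTheory.integral_iUnion (gaussPiece_measurableSet hE)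
    (gaussPiece_disjoint hE1) hInt]
  rw [tsum_congr (fun n => integral_gaussPiece hE hE1 n), tsum_gaussInt hE hE1]
  simp [gaussInt]
end

section
/- A number x ∈ (0,1)\ℚ is a Wilton number if and only if α(x) = {1/x} is a Wilton number, and in that case W(x) = log(1/x) − x·W(α(x)). -/
open Filter

/-- Iterates of the Gauss map. -/
noncomputable def gaussIter (k : ℕ) (x : ℝ) : ℝ := gaussMap^[k] x

/-- `β_{k-1}(x) = α_0(x) ⋯ α_{k-1}(x)` (so `betaProd 0 x = β_{-1}(x) = 1`). -/
noncomputable def betaProd (k : ℕ) (x : ℝ) : ℝ :=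
  ∏ i ∈ Finset.range k, gaussIter i x

/-- `γ_k(x) = β_{k-1}(x) log(1/α_k(x))`. -/
noncomputable def gammaFn (k : ℕ) (x : ℝ) : ℝ :=
  betaProd k x * Real.log (1 / gaussIter k x)

/-- `x` is a Wilton number if `Σ_{k≥0} (-1)^k γ_k(x)` converges. -/
def IsWilton (x : ℝ) : Prop :=
  ∃ W : ℝ, Tendsto (fun N => ∑ k ∈ Finset.range N, (-1 : ℝ) ^ k * gammaFn k x)
    atTop (nhds W)

lemma gaussIter_succ (k : ℕ) (x : ℝ) :
    gaussIter (k + 1) x = gaussIter k (gaussMap x) := by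
  simp [gaussIter, Function.iterate_succ_apply]

lemma gaussIter_zero (x : ℝ) : gaussIter 0 x = x := rfl

lemma betaProd_succ (k : ℕ) (x : ℝ) :
    betaProd (k + 1) x = x * betaProd k (gaussMap x) := by
  rw [betaProd, Finset.prod_range_succ']
  simp only [gaussIter_succ, gaussIter_zero, betaProd]
  ring

lemma gammaFn_succ (k : ℕ) (x : ℝ) :
    gammaFn (k + 1) x = x * gammaFn k (gaussMap x) := by
  rw [gammaFn, gammaFn, betaProd_succ, gaussIter_succ]
  ring

lemma partial_sum_rec (x : ℝ) (N : ℕ) :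
    ∑ k ∈ Finset.range (N + 1), (-1 : ℝ) ^ k * gammaFn k x
      = Real.log (1 / x)
        - x * ∑ k ∈ Finset.range N, (-1 : ℝ) ^ k * gammaFn k (gaussMap x) := by
  rw [Finset.sum_range_succ']
  have h0 : gammaFn 0 x = Real.log (1 / x) := by
    simp [gammaFn, betaProd, gaussIter_zero]
  simp only [gammaFn_succ, pow_succ, pow_zero, one_mul, h0, Finset.mul_sum]
  rw [add_comm, sub_eq_add_neg, ← Finset.sum_neg_distrib]
  congr 1
  exact Finset.sum_congr rfl fun k _ => by ring

/-- `x` is Wilton iff `α(x)` is Wilton, and then `W(x) = log(1/x) - x·W(α(x))`. -/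
theorem isWilton_iff_gaussMap (x : ℝ) (hx : x ∈ Set.Ioo (0:ℝ) 1) (hirr : Irrational x) :
    (IsWilton x ↔ IsWilton (gaussMap x)) ∧
    ∀ W W' : ℝ,
      Tendsto (fun N => ∑ k ∈ Finset.range N, (-1 : ℝ) ^ k * gammaFn k x) atTop (nhds W) →
      Tendsto (fun N => ∑ k ∈ Finset.range N, (-1 : ℝ) ^ k * gammaFn k (gaussMap x)) atTop (nhds W') →
      W = Real.log (1 / x) - x * W' := by
  have hx0 : x ≠ 0 := ne_of_gt hx.1
  set S : ℕ → ℝ := fun N => ∑ k ∈ Finset.range N, (-1 : ℝ) ^ k * gammaFn k x with hS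
  set T : ℕ → ℝ := fun N => ∑ k ∈ Finset.range N, (-1 : ℝ) ^ k * gammaFn k (gaussMap x) with hT
  have hrec : ∀ N, S (N + 1) = Real.log (1 / x) - x * T N := fun N => partial_sum_rec x N
  have key : ∀ W W', Tendsto S atTop (nhds W) → Tendsto T atTop (nhds W') →
      W = Real.log (1 / x) - x * W' := by
    intro W W' hW hW'
    have h1 : Tendsto (fun N => S (N + 1)) atTop (nhds W) :=
      hW.comp (tendsto_add_atTop_nat 1)
    have h2 : Tendsto (fun N => Real.log (1 / x) - x * T N) atTop
        (nhds (Real.log (1 / x) - x * W')) :=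
      tendsto_const_nhds.sub (tendsto_const_nhds.mul hW')
    have := tendsto_nhds_unique h1 (by simpa only [hrec] using h2)
    exact this
  refine ⟨⟨?_, ?_⟩, key⟩
  · rintro ⟨W, hW⟩
    refine ⟨(Real.log (1 / x) - W) / x, ?_⟩
    have h1 : Tendsto (fun N => S (N + 1)) atTop (nhds W) :=
      hW.comp (tendsto_add_atTop_nat 1)
    have h2 : Tendsto (fun N => (Real.log (1 / x) - S (N + 1)) / x) atTop
        (nhds ((Real.log (1 / x) - W) / x)) :=
      (tendsto_const_nhds.sub h1).div_const x
    have heq : ∀ N, (Real.log (1 / x) - S (N + 1)) / x = T N := by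
      intro N
      rw [hrec N]
      field_simp
      ring
    simpa only [heq] using h2
  · rintro ⟨W', hW'⟩
    refine ⟨Real.log (1 / x) - x * W', ?_⟩
    have h2 : Tendsto (fun N => Real.log (1 / x) - x * T N) atTop
        (nhds (Real.log (1 / x) - x * W')) :=
      tendsto_const_nhds.sub (tendsto_const_nhds.mul hW')
    have h3 : Tendsto (fun N => S (N + 1)) atTop (nhds (Real.log (1 / x) - x * W')) := by
      simpa only [hrec] using h2
    exact (tendsto_add_atTop_iff_nat 1).mp h3
end

section
/- There exists a constant C > 0 such that for all L ∈ ℕ, ∫_{x_0}^1 (log(1/x))^L dx = O(Γ(L+1) exp(−C L)), where x_0 = exp(−⌊L/100⌋). -/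
open MeasureTheory Nat

lemma pow_le_factorial_mul_exp (n : ℕ) : (n : ℝ) ^ n ≤ (n ! : ℝ) * Real.exp n := by
  induction n with
  | zero => simp
  | succ n ih =>
    have hstep : ((n : ℝ) + 1) ^ n ≤ (n : ℝ) ^ n * Real.exp 1 := by
      rcases Nat.eq_zero_or_pos n with h | h
      · simp [h, Real.one_le_exp]
      · have hn : (0:ℝ) < n := by exact_mod_cast h
        have h1 : (1 : ℝ) + 1 / n ≤ Real.exp (1 / n) := by
          have := Real.add_one_le_exp (1 / (n:ℝ)); linarith
        have h2 : ((1:ℝ) + 1 / n) ^ n ≤ Real.exp (1 / n) ^ n :=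
          pow_le_pow_left₀ (by positivity) h1 n
        have h3 : Real.exp (1 / (n:ℝ)) ^ n = Real.exp 1 := by
          rw [← Real.exp_nat_mul]
          congr 1
          field_simp
        have h4 : ((n:ℝ) + 1) ^ n = (n:ℝ) ^ n * ((1:ℝ) + 1 / n) ^ n := by
          rw [← mul_pow]; congr 1; field_simp
        rw [h3] at h2
        rw [h4]
        exact mul_le_mul_of_nonneg_left h2 (by positivity)
    have hexp : (0:ℝ) < Real.exp 1 := Real.exp_pos 1
    calc ((n + 1 : ℕ) : ℝ) ^ (n + 1) = ((n:ℝ) + 1) * ((n:ℝ) + 1) ^ n := by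
          push_cast; ring
      _ ≤ ((n:ℝ) + 1) * ((n:ℝ) ^ n * Real.exp 1) :=
          mul_le_mul_of_nonneg_left hstep (by positivity)
      _ ≤ ((n:ℝ) + 1) * (((n ! : ℝ) * Real.exp n) * Real.exp 1) := by
          have := mul_le_mul_of_nonneg_right ih hexp.le
          nlinarith [Nat.cast_nonneg (α := ℝ) n]
      _ = ((n + 1)! : ℝ) * Real.exp (n + 1 : ℕ) := by
          rw [Nat.factorial_succ]
          push_cast
          rw [Real.exp_add]
          ring

/-- There are constants `C > 0` and `c` such that for all `L ∈ ℕ`,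
`∫_{x₀}^1 (log(1/x))^L dx ≤ c · Γ(L+1) exp(-C L)` where `x₀ = exp(-⌊L/100⌋)`. -/
theorem integral_log_pow_tail :
    ∃ C > (0:ℝ), ∃ c > (0:ℝ), ∀ L : ℕ,
      |∫ x in Set.Ioo (Real.exp (-((L / 100 : ℕ) : ℝ))) 1, (Real.log (1 / x)) ^ L| ≤
        c * (Real.Gamma (L + 1) * Real.exp (-C * L)) := by
  refine ⟨3, by norm_num, 1, by norm_num, fun L => ?_⟩
  set M : ℕ := L / 100 with hM
  set a : ℝ := Real.exp (-(M : ℝ)) with ha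
  have ha0 : 0 < a := Real.exp_pos _
  have ha1 : a ≤ 1 := Real.exp_le_one_iff.mpr (neg_nonpos.mpr (Nat.cast_nonneg M))
  -- bound the integral by M^L * measure
  have hmeas : volume (Set.Ioo a 1) < ⊤ := by
    rw [Real.volume_Ioo]
    exact ENNReal.ofReal_lt_top
  have hbound : ∀ x ∈ Set.Ioo a 1, ‖(Real.log (1 / x)) ^ L‖ ≤ (M : ℝ) ^ L := by
    intro x hx
    have hx0 : 0 < x := lt_of_lt_of_le ha0 hx.1.le
    have hlog1 : Real.log (1 / x) = -Real.log x := by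
      rw [one_div, Real.log_inv]
    have hle : Real.log x ≤ 0 := Real.log_nonpos hx0.le hx.2.le
    have hge : -(M : ℝ) < Real.log x := by
      rw [ha] at hx
      calc -(M:ℝ) = Real.log a := by rw [ha, Real.log_exp]
        _ < Real.log x := Real.log_lt_log ha0 hx.1
    rw [hlog1, Real.norm_eq_abs, abs_pow, abs_neg, abs_of_nonpos hle]
    exact pow_le_pow_left₀ (by linarith) (by linarith) L
  have h1 : |∫ x in Set.Ioo a 1, (Real.log (1 / x)) ^ L| ≤
      (M : ℝ) ^ L * (volume (Set.Ioo a 1)).toReal := by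
    rw [← Real.norm_eq_abs]
    exact norm_setIntegral_le_of_norm_le_const hmeas hbound
  have hvol : (volume (Set.Ioo a 1)).toReal ≤ 1 := by
    rw [Real.volume_Ioo, ENNReal.toReal_ofReal_eq_iff.mpr (by linarith)]
    linarith
  have h2 : |∫ x in Set.Ioo a 1, (Real.log (1 / x)) ^ L| ≤ (M : ℝ) ^ L := by
    calc _ ≤ (M : ℝ) ^ L * (volume (Set.Ioo a 1)).toReal := h1
      _ ≤ (M : ℝ) ^ L * 1 := mul_le_mul_of_nonneg_left hvol (by positivity)
      _ = (M : ℝ) ^ L := mul_one _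
  -- now the arithmetic bound : M^L ≤ L! * exp (-3L)
  have hMle : (M : ℝ) ≤ (L : ℝ) / 100 := by
    rw [hM]
    exact_mod_cast Nat.cast_div_le
  have hGamma : Real.Gamma ((L : ℝ) + 1) = (L ! : ℝ) := by
    exact_mod_cast Real.Gamma_nat_eq_factorial L
  have hkey : (M : ℝ) ^ L * Real.exp (3 * L) ≤ (L ! : ℝ) := by
    have he : Real.exp 1 < 2.7182818286 := Real.exp_one_lt_d9
    have he0 : (0:ℝ) < Real.exp 1 := Real.exp_pos 1
    have he4 : Real.exp 4 < 100 := by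
      have : Real.exp 4 = Real.exp 1 ^ 4 := by
        rw [← Real.exp_nat_mul]; norm_num
      rw [this]
      have hsq : Real.exp 1 ^ 2 < 2.7182818286 ^ 2 := by nlinarith
      nlinarith [pow_pos he0 2]
    have step1 : (M : ℝ) ^ L * Real.exp (3 * L) ≤ ((L:ℝ)/100 * Real.exp 3) ^ L := by
      rw [mul_pow, ← Real.exp_nat_mul]
      have := pow_le_pow_left₀ (by positivity : (0:ℝ) ≤ (M:ℝ)) hMle L
      have hexpeq : Real.exp ((L:ℝ) * 3) = Real.exp (3 * (L:ℝ)) := by ring_nf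
      rw [hexpeq]
      exact mul_le_mul_of_nonneg_right this (Real.exp_pos _).le
    have step2 : ((L:ℝ)/100 * Real.exp 3) ^ L ≤ ((L:ℝ) / Real.exp 1) ^ L := by
      apply pow_le_pow_left₀ (by positivity)
      rw [div_mul_eq_mul_div, div_le_div_iff₀ (by norm_num) he0]
      have : Real.exp 3 * Real.exp 1 = Real.exp 4 := by
        rw [← Real.exp_add]; norm_num
      nlinarith [Nat.cast_nonneg (α := ℝ) L]
    have step3 : ((L:ℝ) / Real.exp 1) ^ L ≤ (L ! : ℝ) := by
      rw [div_pow, div_le_iff₀ (by positivity)]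
      have : Real.exp 1 ^ L = Real.exp L := by
        rw [← Real.exp_nat_mul]; ring_nf
      rw [this]
      exact pow_le_factorial_mul_exp L
    linarith
  have hfinal : (M : ℝ) ^ L ≤ (L ! : ℝ) * Real.exp (-3 * L) := by
    have h3 : Real.exp (-3 * (L:ℝ)) * Real.exp (3 * L) = 1 := by
      rw [← Real.exp_add]; ring_nf; exact Real.exp_zero
    have hpos : (0:ℝ) < Real.exp (3 * L) := Real.exp_pos _
    rw [← mul_le_mul_iff_of_pos_right hpos]
    calc (M : ℝ) ^ L * Real.exp (3 * L) ≤ (L ! : ℝ) := hkey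
      _ = (L ! : ℝ) * Real.exp (-3 * L) * Real.exp (3 * L) := by
        rw [mul_assoc, h3, mul_one]
  calc |∫ x in Set.Ioo a 1, (Real.log (1 / x)) ^ L| ≤ (M : ℝ) ^ L := h2
    _ ≤ (L ! : ℝ) * Real.exp (-3 * L) := hfinal
    _ = 1 * (Real.Gamma ((L:ℝ) + 1) * Real.exp (-3 * L)) := by rw [hGamma]; ring
end

section
/- Let d, h ∈ ℕ with h ≥ 1, and u, v > 0. Let l(x) = log(1/x), (Tf)(x) = x f({1/x}), and J(d,h,u,v) = {x ∈ (0,1)\ℚ : (T^d l)(x) ≥ u and (T^{d+h} l)(x) ≥ v}. Then m(J(d,h,u,v)) ≤ 2 exp(−2^{(h−2)/2} v exp(2^{(d−2)/2} u)), where m is the Gauss measure. -/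
open MeasureTheory

/-- `l(x) = log(1/x)`. -/
noncomputable def lFn (x : ℝ) : ℝ := Real.log (1 / x)

/-- The operator `(Tf)(x) = x f(α(x))`. -/
noncomputable def Tmap (f : ℝ → ℝ) : ℝ → ℝ := fun x => x * f (gaussMap x)

/-- `J(d,h,u,v) = {x ∈ (0,1)\ℚ : (T^d l)(x) ≥ u, (T^{d+h} l)(x) ≥ v}`. -/
def Jset (d h : ℕ) (u v : ℝ) : Set ℝ :=
  {x ∈ Set.Ioo (0:ℝ) 1 | Irrational x ∧ u ≤ Tmap^[d] lFn x ∧ v ≤ Tmap^[d + h] lFn x}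

def IrrI : Set ℝ := {x | x ∈ Set.Ioo (0:ℝ) 1 ∧ Irrational x}

noncomputable def gP (k : ℕ) (x : ℝ) : ℝ := ∏ i ∈ Finset.range k, gaussMap^[i] x

lemma gaussMap_mem {x : ℝ} (hx : x ∈ IrrI) : gaussMap x ∈ IrrI := by
  obtain ⟨⟨h0, h1⟩, hirr⟩ := hx
  have hinv : Irrational x⁻¹ := hirr.inv
  have hfr : Irrational (gaussMap x) := by
    unfold gaussMap Int.fract
    exact hinv.sub_intCast _
  refine ⟨⟨?_, ?_⟩, hfr⟩
  · rcases (Int.fract_nonneg (x⁻¹)).lt_or_eq with h | h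
    · exact h
    · exfalso
      apply Rat.not_irrational 0
      have : gaussMap x = ((0:ℚ):ℝ) := by simp [gaussMap, ← h]
      rwa [this] at hfr
  · exact Int.fract_lt_one _

lemma iter_mem {x : ℝ} (hx : x ∈ IrrI) (k : ℕ) : gaussMap^[k] x ∈ IrrI := by
  induction k with
  | zero => simpa using hx
  | succ n ih => rw [Function.iterate_succ_apply']; exact gaussMap_mem ih

lemma gP_succ' (k : ℕ) (x : ℝ) : gP (k+1) x = x * gP k (gaussMap x) := by
  rw [gP, Finset.prod_range_succ']
  simp only [Function.iterate_succ_apply, Function.iterate_zero_apply]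
  rw [mul_comm]
  rfl

lemma gP_add (a b : ℕ) (x : ℝ) :
    gP (a + b) x = gP a x * gP b (gaussMap^[a] x) := by
  rw [gP, Finset.prod_range_add]
  congr 1
  apply Finset.prod_congr rfl
  intro i _
  rw [← Function.iterate_add_apply, add_comm]

lemma gP_succ (k : ℕ) (x : ℝ) : gP (k+1) x = gP k x * gaussMap^[k] x := by
  rw [gP, Finset.prod_range_succ]; rfl

lemma Tmap_iter (k : ℕ) (x : ℝ) :
    Tmap^[k] lFn x = gP k x * lFn (gaussMap^[k] x) := by
  induction k generalizing x with
  | zero => simp [gP]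
  | succ n ih =>
    rw [Function.iterate_succ_apply']
    show x * Tmap^[n] lFn (gaussMap x) = _
    rw [ih, gP_succ', Function.iterate_succ_apply, mul_assoc]

lemma gP_pos {x : ℝ} (hx : x ∈ IrrI) (k : ℕ) : 0 < gP k x :=
  Finset.prod_pos fun i _ => (iter_mem hx i).1.1

lemma gP_le_one {x : ℝ} (hx : x ∈ IrrI) (k : ℕ) : gP k x ≤ 1 :=
  Finset.prod_le_one (fun i _ => (iter_mem hx i).1.1.le)
    (fun i _ => (iter_mem hx i).1.2.le)

lemma pair_le {x : ℝ} (hx : x ∈ IrrI) : x * gaussMap x ≤ 1/2 := by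
  obtain ⟨⟨h0, h1⟩, hirr⟩ := hx
  have hx1 : 1 < x⁻¹ := (one_lt_inv₀ h0).2 h1
  have hn : (1:ℤ) ≤ ⌊x⁻¹⌋ := by
    exact_mod_cast Int.le_floor.2 (by exact_mod_cast hx1.le)
  have hfl : x⁻¹ < ⌊x⁻¹⌋ + 1 := Int.lt_floor_add_one _
  have hxi : x * x⁻¹ = 1 := mul_inv_cancel₀ h0.ne'
  have hn' : (1:ℝ) ≤ (⌊x⁻¹⌋ : ℝ) := by exact_mod_cast hn
  unfold gaussMap Int.fract
  nlinarith [mul_lt_mul_of_pos_left hfl h0]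

lemma gP_le_half_pow {x : ℝ} (hx : x ∈ IrrI) : ∀ k : ℕ, gP k x ≤ (1/2:ℝ)^(k/2) := by
  intro k
  induction k using Nat.strong_induction_on with
  | _ k ih =>
    match k with
    | 0 => simp [gP]
    | 1 =>
      simpa [gP] using (iter_mem hx 0).1.2.le
    | (m+2) =>
      have h1 : gP m x ≤ (1/2:ℝ)^(m/2) := ih m (by omega)
      have hy : gaussMap^[m] x ∈ IrrI := iter_mem hx m
      have hpair : gaussMap^[m] x * gaussMap^[m+1] x ≤ 1/2 := by
        rw [Function.iterate_succ_apply']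
        exact pair_le hy
      have hpairnn : 0 ≤ gaussMap^[m] x * gaussMap^[m+1] x :=
        mul_nonneg hy.1.1.le (iter_mem hx (m+1)).1.1.le
      have heq : gP (m+2) x = gP m x * (gaussMap^[m] x * gaussMap^[m+1] x) := by
        rw [gP_succ, gP_succ, mul_assoc]
      have hdiv : (m+2)/2 = m/2 + 1 := by omega
      rw [heq, hdiv, pow_succ]
      exact mul_le_mul h1 hpair hpairnn (pow_nonneg (by norm_num) _)

lemma half_pow_le (m : ℕ) (r : ℝ) (hr : r ≤ (m:ℝ)) : (1/2:ℝ)^m ≤ (2:ℝ)^(-r) := by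
  rw [one_div, inv_pow, ← Real.rpow_natCast 2 m, ← Real.rpow_neg (by norm_num : (0:ℝ) ≤ 2)]
  exact Real.rpow_le_rpow_of_exponent_le one_le_two (by linarith)

lemma lFn_eq (x : ℝ) : lFn x = -Real.log x := by rw [lFn, one_div, Real.log_inv]

lemma lFn_pos {x : ℝ} (hx : x ∈ IrrI) : 0 < lFn x := by
  rw [lFn]
  exact Real.log_pos (by rw [one_div]; exact (one_lt_inv₀ hx.1.1).2 hx.1.2)

lemma Jset_subset (d h : ℕ) (hh : 1 ≤ h) (u v : ℝ) (hu : 0 < u) (hv : 0 < v) {M : ℝ}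
    (hM : M = (2:ℝ) ^ (((h:ℝ) - 2) / 2) * v * Real.exp ((2:ℝ) ^ (((d:ℝ) - 2) / 2) * u)) :
    Jset d h u v ⊆ {x | x ∈ IrrI ∧ gaussMap^[d+h] x ≤ Real.exp (-M)} := by
  intro x hx
  obtain ⟨hIoo, hirr, hu', hv'⟩ := hx
  have hxI : x ∈ IrrI := ⟨hIoo, hirr⟩
  set rd : ℝ := ((d:ℝ)-2)/2 with hrd
  set rh : ℝ := ((h:ℝ)-2)/2 with hrh
  -- bound on gP d x
  have hcast : ((d:ℝ)) ≤ 2*((d/2 : ℕ):ℝ)+1 := by exact_mod_cast Nat.lt_succ_iff.1 (by omega)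
  have hBd : gP d x ≤ (2:ℝ)^(-rd) :=
    (gP_le_half_pow hxI d).trans (half_pow_le _ _ (by rw [hrd]; linarith))
  have hLd : 0 < lFn (gaussMap^[d] x) := lFn_pos (iter_mem hxI d)
  have hud : u ≤ (2:ℝ)^(-rd) * lFn (gaussMap^[d] x) := by
    calc u ≤ gP d x * lFn (gaussMap^[d] x) := by rw [← Tmap_iter]; exact hu'
    _ ≤ _ := mul_le_mul_of_nonneg_right hBd hLd.le
  have hmul : (2:ℝ)^(-rd) * (2:ℝ)^rd = 1 := by
    rw [← Real.rpow_add two_pos]; simp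
  have hLd' : u * (2:ℝ)^rd ≤ lFn (gaussMap^[d] x) := by
    have h2 := mul_le_mul_of_nonneg_right hud (Real.rpow_pos_of_pos two_pos rd).le
    calc u * (2:ℝ)^rd ≤ (2:ℝ)^(-rd) * lFn (gaussMap^[d] x) * (2:ℝ)^rd := h2
    _ = ((2:ℝ)^(-rd) * (2:ℝ)^rd) * lFn (gaussMap^[d] x) := by ring
    _ = _ := by rw [hmul, one_mul]
  have hyd : gaussMap^[d] x ≤ Real.exp (-(u * (2:ℝ)^rd)) := by
    have hydpos := (iter_mem hxI d).1.1
    have hlog : Real.log (gaussMap^[d] x) ≤ -(u*(2:ℝ)^rd) := by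
      have h3 := hLd'; rw [lFn_eq] at h3; linarith
    calc gaussMap^[d] x = Real.exp (Real.log (gaussMap^[d] x)) := (Real.exp_log hydpos).symm
    _ ≤ _ := Real.exp_le_exp.2 hlog
  -- split gP (d+h)
  set h' := h - 1 with hh'
  have heq : d + h = (d+1) + h' := by omega
  have hsplit : gP (d+h) x = gP d x * gaussMap^[d] x * gP h' (gaussMap^[d+1] x) := by
    rw [heq, gP_add, gP_succ]
  have hcast2 : ((h:ℝ)) ≤ 2*((h'/2 : ℕ):ℝ)+2 := by exact_mod_cast (by omega : h ≤ 2*(h'/2)+2)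
  have hgPh : gP h' (gaussMap^[d+1] x) ≤ (2:ℝ)^(-rh) :=
    (gP_le_half_pow (iter_mem hxI (d+1)) h').trans (half_pow_le _ _ (by rw [hrh]; linarith))
  set Qbar := Real.exp (-(u*(2:ℝ)^rd)) * (2:ℝ)^(-rh) with hQbar
  have hQ : gP (d+h) x ≤ Qbar := by
    rw [hsplit, hQbar]
    have h1 : gP d x * gaussMap^[d] x ≤ Real.exp (-(u*(2:ℝ)^rd)) := by
      calc gP d x * gaussMap^[d] x ≤ 1 * Real.exp (-(u*(2:ℝ)^rd)) :=
        mul_le_mul (gP_le_one hxI d) hyd (iter_mem hxI d).1.1.le zero_le_one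
      _ = _ := one_mul _
    exact mul_le_mul h1 hgPh (gP_pos (iter_mem hxI (d+1)) h').le (Real.exp_pos _).le
  have hL' : 0 < lFn (gaussMap^[d+h] x) := lFn_pos (iter_mem hxI _)
  have hv2 : v ≤ Qbar * lFn (gaussMap^[d+h] x) := by
    calc v ≤ gP (d+h) x * lFn (gaussMap^[d+h] x) := by rw [← Tmap_iter]; exact hv'
    _ ≤ _ := mul_le_mul_of_nonneg_right hQ hL'.le
  have e1 : Real.exp ((2:ℝ)^rd*u) * Real.exp (-(u*(2:ℝ)^rd)) = 1 := by
    rw [← Real.exp_add, mul_comm ((2:ℝ)^rd) u]; simp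
  have e2 : (2:ℝ)^rh * (2:ℝ)^(-rh) = 1 := by rw [← Real.rpow_add two_pos]; simp
  have hMQv : M * Qbar = v := by
    rw [hM, hQbar]
    calc (2:ℝ)^rh * v * Real.exp ((2:ℝ)^rd*u) * (Real.exp (-(u*(2:ℝ)^rd)) * (2:ℝ)^(-rh))
        = v * (Real.exp ((2:ℝ)^rd*u) * Real.exp (-(u*(2:ℝ)^rd))) * ((2:ℝ)^rh * (2:ℝ)^(-rh)) := by ring
    _ = v := by rw [e1, e2]; ring
  have hQbarpos : 0 < Qbar := mul_pos (Real.exp_pos _) (Real.rpow_pos_of_pos two_pos _)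
  have hML : M ≤ lFn (gaussMap^[d+h] x) := by
    have h4 : M * Qbar ≤ lFn (gaussMap^[d+h] x) * Qbar := by
      rw [hMQv, mul_comm]; exact hv2
    exact le_of_mul_le_mul_right h4 hQbarpos
  refine ⟨hxI, ?_⟩
  have hypos := (iter_mem hxI (d+h)).1.1
  have hlog : Real.log (gaussMap^[d+h] x) ≤ -M := by
    rw [lFn_eq] at hML; linarith
  calc gaussMap^[d+h] x = Real.exp (Real.log (gaussMap^[d+h] x)) := (Real.exp_log hypos).symm
  _ ≤ _ := Real.exp_le_exp.2 hlog

lemma measurable_gaussMap : Measurable gaussMap := measurable_inv.fract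

lemma measurableSet_IrrI : MeasurableSet IrrI := by
  have h1 : IrrI = Set.Ioo 0 1 ∩ {x | Irrational x} := rfl
  rw [h1]
  refine measurableSet_Ioo.inter ?_
  have h2 : {x : ℝ | Irrational x} = (Set.range ((↑) : ℚ → ℝ))ᶜ := rfl
  rw [h2]
  exact (Set.countable_range _).measurableSet.compl

lemma branch (B : Set ℝ) (hB : MeasurableSet B) (hB1 : B ⊆ Set.Ioo (0:ℝ) 1) (n : ℕ) :
    ∫⁻ x in (fun y => (y + ((n:ℝ)+1))⁻¹) '' B, ENNReal.ofReal (1+x)⁻¹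
      = ∫⁻ y in B, ENNReal.ofReal ((y+((n:ℝ)+1))⁻¹ - (y+((n:ℝ)+2))⁻¹) := by
  set c : ℝ := (n:ℝ)+1 with hc
  have hc1 : 1 ≤ c := by
    have : (0:ℝ) ≤ (n:ℝ) := Nat.cast_nonneg n
    rw [hc]; linarith
  have hder : ∀ y ∈ B, HasDerivWithinAt (fun y : ℝ => (y + c)⁻¹) (-(1:ℝ)/(y+c)^2) B y := by
    intro y hy
    have h0 : y + c ≠ 0 := by have := (hB1 hy).1; positivity
    exact (((hasDerivAt_id y).add_const c).inv h0).hasDerivWithinAt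
  have hinj : Set.InjOn (fun y : ℝ => (y + c)⁻¹) B := by
    intro a _ b _ hab
    have h5 : a + c = b + c := inv_injective hab
    linarith
  have hcv := lintegral_image_eq_lintegral_abs_det_fderiv_mul volume hB
      (fun y hy => (hder y hy).hasFDerivWithinAt) hinj (fun x => ENNReal.ofReal (1+x)⁻¹)
  simp only [ContinuousLinearMap.det_toSpanSingleton] at hcv
  rw [hcv]
  apply setLIntegral_congr_fun hB
  intro y hy
  have hy0 : 0 < y := (hB1 hy).1
  have hw : 0 < y + c := by linarith
  have hw1 : 0 < y + c + 1 := by linarith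
  have habs : |(-(1:ℝ)/(y+c)^2)| = 1/(y+c)^2 := by
    rw [abs_div, abs_neg, abs_one, abs_of_pos (pow_pos hw 2)]
  have hkey : (1:ℝ)/(y+c)^2 * (1 + (y+c)⁻¹)⁻¹ = (y+c)⁻¹ - (y+c+1)⁻¹ := by
    have h1 : (1:ℝ) + (y+c)⁻¹ ≠ 0 := by positivity
    field_simp
    ring
  have h2 : y + ((n:ℝ)+2) = y + c + 1 := by rw [hc]; ring
  beta_reduce
  rw [← ENNReal.ofReal_mul (by positivity), habs, hkey, h2]

lemma telescope (y : ℝ) (hy : 0 < y) :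
    (∑' n : ℕ, ENNReal.ofReal ((y+((n:ℝ)+1))⁻¹ - (y+((n:ℝ)+2))⁻¹)) = ENNReal.ofReal (1+y)⁻¹ := by
  have hnn : ∀ n : ℕ, 0 ≤ (y+((n:ℝ)+1))⁻¹ - (y+((n:ℝ)+2))⁻¹ := by
    intro n
    have h1 : 0 < y+((n:ℝ)+1) := by positivity
    have h3 : (y+((n:ℝ)+2))⁻¹ ≤ (y+((n:ℝ)+1))⁻¹ := by
      gcongr
      linarith
    linarith
  have hsum : HasSum (fun n : ℕ => (y+((n:ℝ)+1))⁻¹ - (y+((n:ℝ)+2))⁻¹) ((y+1)⁻¹) := by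
    rw [hasSum_iff_tendsto_nat_of_nonneg hnn]
    have hps : ∀ N : ℕ, (∑ i ∈ Finset.range N, ((y+((i:ℝ)+1))⁻¹ - (y+((i:ℝ)+2))⁻¹))
        = (y+1)⁻¹ - (y+((N:ℝ)+1))⁻¹ := by
      intro N
      have h6 := Finset.sum_range_sub' (f := fun i : ℕ => (y+((i:ℝ)+1))⁻¹) N
      norm_num at h6
      rw [← h6, Finset.sum_sub_distrib]
      congr 1
      apply Finset.sum_congr rfl
      intro i _
      ring_nf
    have hlim : Filter.Tendsto (fun N : ℕ => (y+1)⁻¹ - (y+((N:ℝ)+1))⁻¹)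
        Filter.atTop (nhds ((y+1)⁻¹)) := by
      have h0 : Filter.Tendsto (fun N : ℕ => (y+((N:ℝ)+1))⁻¹) Filter.atTop (nhds 0) := by
        apply Filter.Tendsto.inv_tendsto_atTop
        apply Filter.tendsto_atTop_add_const_left
        apply Filter.tendsto_atTop_add_const_right
        exact tendsto_natCast_atTop_atTop
      simpa using tendsto_const_nhds.sub h0
    exact hlim.congr (fun N => (hps N).symm)
  rw [← ENNReal.ofReal_tsum_of_nonneg hnn hsum.summable, hsum.tsum_eq, add_comm y 1]

lemma step_bound (B : Set ℝ) (hB : MeasurableSet B) (hBsub : B ⊆ IrrI) :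
    ∫⁻ x in {x | x ∈ IrrI ∧ gaussMap x ∈ B}, ENNReal.ofReal (1+x)⁻¹
      ≤ ∫⁻ y in B, ENNReal.ofReal (1+y)⁻¹ := by
  have hsub : {x | x ∈ IrrI ∧ gaussMap x ∈ B} ⊆
      ⋃ n : ℕ, (fun y => (y + ((n:ℝ)+1))⁻¹) '' B := by
    rintro x ⟨⟨⟨hx0, hx1⟩, hirr⟩, hgx⟩
    have hx1' : 1 < x⁻¹ := (one_lt_inv₀ hx0).2 hx1
    have hfl1 : (1:ℤ) ≤ ⌊x⁻¹⌋ := Int.le_floor.2 (by exact_mod_cast hx1'.le)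
    set n : ℕ := (⌊x⁻¹⌋ - 1).toNat with hn
    have hnz : (n:ℤ) = ⌊x⁻¹⌋ - 1 := by rw [hn]; exact Int.toNat_of_nonneg (by omega)
    have hnc : ((n:ℝ) + 1) = ((⌊x⁻¹⌋ : ℤ) : ℝ) := by
      have : ((n:ℝ)) = ((⌊x⁻¹⌋ : ℤ) : ℝ) - 1 := by exact_mod_cast hnz
      linarith
    refine Set.mem_iUnion.2 ⟨n, ⟨gaussMap x, hgx, ?_⟩⟩
    show (gaussMap x + ((n:ℝ)+1))⁻¹ = x
    rw [hnc]
    unfold gaussMap Int.fract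
    rw [sub_add_cancel, inv_inv]
  calc ∫⁻ x in {x | x ∈ IrrI ∧ gaussMap x ∈ B}, ENNReal.ofReal (1+x)⁻¹
      ≤ ∫⁻ x in ⋃ n : ℕ, (fun y => (y + ((n:ℝ)+1))⁻¹) '' B, ENNReal.ofReal (1+x)⁻¹ :=
        lintegral_mono_set hsub
    _ ≤ ∑' n : ℕ, ∫⁻ x in (fun y => (y + ((n:ℝ)+1))⁻¹) '' B, ENNReal.ofReal (1+x)⁻¹ :=
        lintegral_iUnion_le _ _
    _ = ∑' n : ℕ, ∫⁻ y in B, ENNReal.ofReal ((y+((n:ℝ)+1))⁻¹ - (y+((n:ℝ)+2))⁻¹) :=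
        tsum_congr (fun n => branch B hB (fun y hy => (hBsub hy).1) n)
    _ = ∫⁻ y in B, ∑' n : ℕ, ENNReal.ofReal ((y+((n:ℝ)+1))⁻¹ - (y+((n:ℝ)+2))⁻¹) := by
        rw [← lintegral_tsum]
        intro n
        exact (ENNReal.measurable_ofReal.comp ((measurable_id.add_const _).inv.sub
          (measurable_id.add_const _).inv)).aemeasurable
    _ = ∫⁻ y in B, ENNReal.ofReal (1+y)⁻¹ := by
        apply setLIntegral_congr_fun hB
        intro y hy
        exact telescope y (hBsub hy).1.1

lemma iter_bound (k : ℕ) (t : ℝ) (ht : 0 ≤ t) :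
    ∫⁻ x in {x | x ∈ IrrI ∧ gaussMap^[k] x ≤ t}, ENNReal.ofReal (1+x)⁻¹
      ≤ ENNReal.ofReal t := by
  induction k with
  | zero =>
    have hsub : {x | x ∈ IrrI ∧ gaussMap^[0] x ≤ t} ⊆ Set.Ioc 0 t := by
      rintro x ⟨⟨⟨h0, _⟩, _⟩, hxt⟩
      exact ⟨h0, by simpa using hxt⟩
    calc ∫⁻ x in {x | x ∈ IrrI ∧ gaussMap^[0] x ≤ t}, ENNReal.ofReal (1+x)⁻¹
        ≤ ∫⁻ x in Set.Ioc 0 t, ENNReal.ofReal (1+x)⁻¹ := lintegral_mono_set hsub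
      _ ≤ ∫⁻ _ in Set.Ioc 0 t, 1 := by
          apply setLIntegral_mono measurable_const
          intro x hx
          apply ENNReal.ofReal_le_one.2
          have hx0 : (0:ℝ) < x := hx.1
          have : (1+x)⁻¹ ≤ 1⁻¹ := by gcongr <;> linarith
          simpa using this
      _ = volume (Set.Ioc 0 t) := setLIntegral_one _
      _ = ENNReal.ofReal t := by rw [Real.volume_Ioc, sub_zero]
  | succ k ih =>
    have hsub : {x | x ∈ IrrI ∧ gaussMap^[k+1] x ≤ t} ⊆
        {x | x ∈ IrrI ∧ gaussMap x ∈ {y | y ∈ IrrI ∧ gaussMap^[k] y ≤ t}} := by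
      rintro x ⟨hxI, hxt⟩
      exact ⟨hxI, gaussMap_mem hxI, by rwa [← Function.iterate_succ_apply]⟩
    have hmeas : MeasurableSet {y : ℝ | y ∈ IrrI ∧ gaussMap^[k] y ≤ t} := by
      have : {y : ℝ | y ∈ IrrI ∧ gaussMap^[k] y ≤ t}
          = IrrI ∩ (gaussMap^[k]) ⁻¹' Set.Iic t := rfl
      rw [this]
      exact measurableSet_IrrI.inter ((measurable_gaussMap.iterate k) measurableSet_Iic)
    calc ∫⁻ x in {x | x ∈ IrrI ∧ gaussMap^[k+1] x ≤ t}, ENNReal.ofReal (1+x)⁻¹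
        ≤ ∫⁻ x in {x | x ∈ IrrI ∧ gaussMap x ∈ {y | y ∈ IrrI ∧ gaussMap^[k] y ≤ t}},
            ENNReal.ofReal (1+x)⁻¹ := lintegral_mono_set hsub
      _ ≤ ∫⁻ y in {y | y ∈ IrrI ∧ gaussMap^[k] y ≤ t}, ENNReal.ofReal (1+y)⁻¹ :=
          step_bound _ hmeas (fun y hy => hy.1)
      _ ≤ ENNReal.ofReal t := ih

/-- `m(J(d,h,u,v)) ≤ 2 exp(-2^{(h-2)/2} v exp(2^{(d-2)/2} u))`, `m` the Gauss measure. -/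
theorem gaussMeasure_Jset_bound (d h : ℕ) (hh : 1 ≤ h) (u v : ℝ)
    (hu : 0 < u) (hv : 0 < v) :
    (Real.log 2)⁻¹ * ∫ x in Jset d h u v, (1 + x)⁻¹ ≤
      2 * Real.exp (-((2:ℝ) ^ (((h:ℝ) - 2) / 2) * v *
        Real.exp ((2:ℝ) ^ (((d:ℝ) - 2) / 2) * u))) := by
  set M := (2:ℝ) ^ (((h:ℝ) - 2) / 2) * v * Real.exp ((2:ℝ) ^ (((d:ℝ) - 2) / 2) * u) with hM
  set ε := Real.exp (-M) with hε
  have hεpos : 0 < ε := Real.exp_pos _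
  have hsub := Jset_subset d h hh u v hu hv hM
  have hlFn : Measurable lFn := by
    unfold lFn
    exact Real.measurable_log.comp (measurable_const.div measurable_id)
  have hTm : ∀ k, Measurable (Tmap^[k] lFn) := by
    intro k
    have hfe : Tmap^[k] lFn = fun x => gP k x * lFn (gaussMap^[k] x) := funext (Tmap_iter k)
    rw [hfe]
    apply Measurable.mul
    · unfold gP
      exact Finset.measurable_prod _ (fun i _ => measurable_gaussMap.iterate i)
    · exact hlFn.comp (measurable_gaussMap.iterate k)
  have hJm : MeasurableSet (Jset d h u v) := by
    have heq : Jset d h u v = Set.Ioo 0 1 ∩ ({x | Irrational x} ∩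
        ((Tmap^[d] lFn) ⁻¹' Set.Ici u ∩ (Tmap^[d+h] lFn) ⁻¹' Set.Ici v)) := rfl
    rw [heq]
    refine measurableSet_Ioo.inter (MeasurableSet.inter ?_ (MeasurableSet.inter ?_ ?_))
    · exact (Set.countable_range ((↑) : ℚ → ℝ)).measurableSet.compl
    · exact hTm d measurableSet_Ici
    · exact hTm (d+h) measurableSet_Ici
  have hnn : 0 ≤ᵐ[volume.restrict (Jset d h u v)] fun x : ℝ => (1+x)⁻¹ := by
    refine (ae_restrict_iff' hJm).2 (Filter.Eventually.of_forall ?_)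
    intro x hx
    have hx0 : (0:ℝ) < x := hx.1.1
    positivity
  have hmeas : AEStronglyMeasurable (fun x : ℝ => (1+x)⁻¹) (volume.restrict (Jset d h u v)) :=
    ((measurable_const.add measurable_id).inv).aestronglyMeasurable
  rw [integral_eq_lintegral_of_nonneg_ae hnn hmeas]
  have hb1 : (∫⁻ x in Jset d h u v, ENNReal.ofReal (1+x)⁻¹) ≤ ENNReal.ofReal ε := by
    calc (∫⁻ x in Jset d h u v, ENNReal.ofReal (1+x)⁻¹)
        ≤ ∫⁻ x in {x | x ∈ IrrI ∧ gaussMap^[d+h] x ≤ ε}, ENNReal.ofReal (1+x)⁻¹ :=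
          lintegral_mono_set hsub
      _ ≤ ENNReal.ofReal ε := iter_bound (d+h) ε hεpos.le
  have htoReal : (∫⁻ x in Jset d h u v, ENNReal.ofReal (1+x)⁻¹).toReal ≤ ε := by
    calc (∫⁻ x in Jset d h u v, ENNReal.ofReal (1+x)⁻¹).toReal
        ≤ (ENNReal.ofReal ε).toReal := ENNReal.toReal_mono (by simp) hb1
      _ = ε := ENNReal.toReal_ofReal hεpos.le
  have hlog2 : (Real.log 2)⁻¹ ≤ 2 := by
    have h9 := Real.log_two_gt_d9
    have h12 : (1:ℝ)/2 ≤ Real.log 2 := by linarith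
    calc (Real.log 2)⁻¹ ≤ ((1:ℝ)/2)⁻¹ := by gcongr
      _ = 2 := by norm_num
  calc (Real.log 2)⁻¹ * (∫⁻ x in Jset d h u v, ENNReal.ofReal (1+x)⁻¹).toReal
      ≤ 2 * (∫⁻ x in Jset d h u v, ENNReal.ofReal (1+x)⁻¹).toReal :=
        mul_le_mul_of_nonneg_right hlog2 ENNReal.toReal_nonneg
    _ ≤ 2 * ε := by linarith
end

section
/- A(1) = ∫_0^∞ {t}²/t² dt = log(2π) − γ, where γ is the Euler–Mascheroni constant. -/
open MeasureTheory Real Filter Set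
open Topology intervalIntegral

lemma aux_meas : Measurable (fun t : ℝ ↦ Int.fract t ^ 2 / t ^ 2) :=
  (measurable_fract.pow_const 2).div (measurable_id.pow_const 2)

lemma fract_le_self {t : ℝ} (ht : 0 ≤ t) : Int.fract t ≤ t := by
  have h : Int.fract t = t - ⌊t⌋ := Int.self_sub_floor t ▸ rfl
  have h2 : (0:ℝ) ≤ (⌊t⌋ : ℝ) := by exact_mod_cast Int.floor_nonneg.mpr ht
  linarith

lemma aux_int_Ioi1 : IntegrableOn (fun t : ℝ ↦ Int.fract t ^ 2 / t ^ 2) (Set.Ioi 1) := by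
  have h : IntegrableOn (fun t : ℝ ↦ t ^ (-2 : ℝ)) (Set.Ioi 1) :=
    integrableOn_Ioi_rpow_of_lt (by norm_num) one_pos
  refine h.integrable.mono aux_meas.aestronglyMeasurable.restrict ?_
  filter_upwards [ae_restrict_mem measurableSet_Ioi] with t ht
  have ht1 : (1:ℝ) < t := ht
  have ht0 : (0:ℝ) < t := lt_trans one_pos ht1
  have hrp : t ^ (-2 : ℝ) = (t^2)⁻¹ := by
    rw [Real.rpow_neg ht0.le, Real.rpow_two]
  rw [Real.norm_eq_abs, Real.norm_eq_abs, hrp, abs_of_nonneg (by positivity),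
    abs_of_nonneg (by positivity)]
  rw [div_le_iff₀ (by positivity), inv_mul_cancel₀ (by positivity)]
  nlinarith [Int.fract_nonneg t, Int.fract_lt_one t]

lemma aux_int_Ioc01 : IntegrableOn (fun t : ℝ ↦ Int.fract t ^ 2 / t ^ 2) (Set.Ioc 0 1) := by
  refine Integrable.mono (g := fun _ : ℝ ↦ (1:ℝ)) ?_ aux_meas.aestronglyMeasurable.restrict ?_
  · exact (integrableOn_const_iff).mpr (Or.inr (by simp))
  · filter_upwards [ae_restrict_mem measurableSet_Ioc] with t ht
    have ht0 : (0:ℝ) < t := ht.1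
    have h1 : Int.fract t ≤ t := fract_le_self ht0.le
    have h2 : 0 ≤ Int.fract t := Int.fract_nonneg t
    rw [Real.norm_eq_abs, Real.norm_eq_abs, abs_one, abs_of_nonneg (by positivity)]
    rw [div_le_one (by positivity)]
    nlinarith

lemma aux_int_Ioi0 : IntegrableOn (fun t : ℝ ↦ Int.fract t ^ 2 / t ^ 2) (Set.Ioi 0) := by
  rw [← Set.Ioc_union_Ioi_eq_Ioi (zero_le_one)]
  exact aux_int_Ioc01.union aux_int_Ioi1

lemma aux_int01 : ∫ t in Set.Ioc (0:ℝ) 1, Int.fract t ^ 2 / t ^ 2 = 1 := by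
  rw [integral_Ioc_eq_integral_Ioo]
  rw [setIntegral_congr_fun measurableSet_Ioo (g := fun _ ↦ (1:ℝ)) ?_]
  · simp
  · intro t ht
    simp only []
    rw [Int.fract_eq_self.mpr ⟨ht.1.le, ht.2⟩, div_self (pow_ne_zero 2 ht.1.ne')]

noncomputable def vv (n : ℕ) : ℝ := 1 + n/(n+1) - 2*n*(Real.log (n+1) - Real.log n)

lemma aux_step (n : ℕ) (hn : 1 ≤ n) :
    ∫ t in (n : ℝ)..((n:ℝ)+1), Int.fract t ^ 2 / t ^ 2 = vv n := by
  have hn0 : (0:ℝ) < n := by exact_mod_cast hn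
  have hle : (n:ℝ) ≤ (n:ℝ)+1 := by linarith
  -- replace integrand by (t - n)^2 / t^2 a.e.
  have hcong : ∫ t in (n : ℝ)..((n:ℝ)+1), Int.fract t ^ 2 / t ^ 2
      = ∫ t in (n : ℝ)..((n:ℝ)+1), (t - n) ^ 2 / t ^ 2 := by
    rw [intervalIntegral.integral_of_le hle, intervalIntegral.integral_of_le hle,
      integral_Ioc_eq_integral_Ioo, integral_Ioc_eq_integral_Ioo]
    refine setIntegral_congr_fun measurableSet_Ioo (fun t ht => ?_)
    have hfl : ⌊t⌋ = (n : ℤ) := by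
      rw [Int.floor_eq_iff]
      constructor
      · exact_mod_cast ht.1.le
      · exact_mod_cast ht.2
    simp only [Int.fract, hfl, Int.cast_natCast]
  rw [hcong]
  have hderiv : ∀ t ∈ Set.uIcc (n:ℝ) ((n:ℝ)+1),
      HasDerivAt (fun t : ℝ ↦ t - 2*n * Real.log t - n^2 * t⁻¹) ((t - n)^2 / t^2) t := by
    intro t ht
    rw [Set.uIcc_of_le hle] at ht
    have ht0 : (0:ℝ) < t := lt_of_lt_of_le hn0 ht.1
    have h1 : HasDerivAt (fun t : ℝ ↦ t - 2*n * Real.log t - n^2 * t⁻¹)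
        (1 - 2*(n:ℝ) * t⁻¹ - (n:ℝ)^2 * (-(t^2)⁻¹)) t :=
      ((hasDerivAt_id t).sub ((Real.hasDerivAt_log ht0.ne').const_mul (2*(n:ℝ)))).sub
        ((hasDerivAt_inv ht0.ne').const_mul ((n:ℝ)^2))
    convert h1 using 1
    field_simp
    ring
  have hcont : IntervalIntegrable (fun t : ℝ ↦ (t - n)^2 / t^2) volume (n:ℝ) ((n:ℝ)+1) := by
    apply ContinuousOn.intervalIntegrable
    apply ContinuousOn.div
    · fun_prop
    · fun_prop
    · intro t ht
      rw [Set.uIcc_of_le hle] at ht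
      have ht0 : (0:ℝ) < t := lt_of_lt_of_le hn0 ht.1
      positivity
  rw [intervalIntegral.integral_eq_sub_of_hasDerivAt hderiv hcont]
  have h1 : Real.log ((n:ℝ)+1) = Real.log ((n:ℝ)+1) := rfl
  unfold vv
  have hne : (n:ℝ) ≠ 0 := hn0.ne'
  have hne1 : (n:ℝ)+1 ≠ 0 := by positivity
  field_simp
  ring
noncomputable def EE (N : ℕ) : ℝ :=
  2*N - 1 - (harmonic N : ℝ) - 2*N*Real.log N + 2*Real.log (Nat.factorial N)

lemma sum_vv (m : ℕ) : ∑ k ∈ Finset.range m, vv (k+1) = EE (m+1) := by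
  induction m with
  | zero => simp [EE, harmonic_succ]; ring
  | succ m ih =>
    rw [Finset.sum_range_succ, ih]
    have hfac : ((Nat.factorial (m+2)) : ℝ) = ((m:ℝ)+2) * ((Nat.factorial (m+1)) : ℝ) := by
      rw [Nat.factorial_succ]; push_cast; ring
    have hlog : Real.log ((Nat.factorial (m+2) : ℝ)) = Real.log ((m:ℝ)+2) + Real.log ((Nat.factorial (m+1) : ℝ)) := by
      rw [hfac, Real.log_mul (by positivity) (by exact_mod_cast (Nat.factorial_pos _).ne')]
    have hh : (harmonic (m+2) : ℝ) = (harmonic (m+1) : ℝ) + 1/((m:ℝ)+2) := by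
      rw [harmonic_succ]; push_cast; ring
    unfold EE vv
    rw [hlog, hh]
    push_cast
    have h2 : ((m:ℝ)+2) ≠ 0 := by positivity
    field_simp
    ring

noncomputable def ss (n : ℕ) : ℝ :=
  Real.log (Nat.factorial n) - n * Real.log n + n - (1/2) * Real.log (2 * Real.pi * n)

lemma tendsto_ss : Tendsto ss atTop (𝓝 0) := by
  have h0 : Tendsto (fun n : ℕ ↦ Real.log (Stirling.stirlingSeq n)) atTop (𝓝 (Real.log (Real.sqrt π))) :=
    (Real.continuousAt_log (by positivity)).tendsto.comp Stirling.tendsto_stirlingSeq_sqrt_pi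
  have hsp : Real.log (Real.sqrt π) = (1/2) * Real.log π := by
    rw [Real.log_sqrt Real.pi_pos.le]; ring
  have heq : ∀ᶠ n : ℕ in atTop, Real.log (Stirling.stirlingSeq n) - (1/2) * Real.log π = ss n := by
    filter_upwards [eventually_ge_atTop 1] with n hn
    have hn0 : (0:ℝ) < n := by exact_mod_cast hn
    rw [Stirling.log_stirlingSeq_formula]
    unfold ss
    rw [Real.log_div hn0.ne' (Real.exp_ne_zero 1), Real.log_exp,
      show (2:ℝ) * π * n = π * (2*n) by ring,
      Real.log_mul Real.pi_pos.ne' (by positivity)]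
    ring
  have := (h0.sub (tendsto_const_nhds (x := (1/2) * Real.log π))).congr' heq
  rwa [hsp, sub_self] at this


lemma tendsto_EE : Tendsto EE atTop
    (𝓝 (Real.log (2*Real.pi) - Real.eulerMascheroniConstant - 1)) := by
  have heq : ∀ᶠ N : ℕ in atTop,
      2 * ss N - ((harmonic N : ℝ) - Real.log N) + (Real.log (2*Real.pi) - 1) = EE N := by
    filter_upwards [eventually_ge_atTop 1] with N hN
    have hN0 : (0:ℝ) < N := by exact_mod_cast hN
    unfold ss EE
    rw [Real.log_mul (by positivity) hN0.ne']
    ring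
  have h := ((tendsto_ss.const_mul 2).sub Real.tendsto_harmonic_sub_log).add
    (tendsto_const_nhds (x := Real.log (2*Real.pi) - 1))
  simp only [mul_zero, zero_sub] at h
  have := h.congr' heq
  convert this using 2
  ring

lemma aux_interval_int (a b : ℝ) (ha : 1 ≤ a) (hab : a ≤ b) :
    IntervalIntegrable (fun t : ℝ ↦ Int.fract t ^ 2 / t ^ 2) volume a b := by
  rw [intervalIntegrable_iff, Set.uIoc_of_le hab]
  exact aux_int_Ioi1.mono_set (fun t ht => lt_of_le_of_lt ha ht.1)

lemma integral_one_to (m : ℕ) :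
    ∫ t in (1:ℝ)..((m:ℝ)+1), Int.fract t ^ 2 / t ^ 2 = EE (m+1) := by
  rw [← sum_vv m]
  have key := intervalIntegral.sum_integral_adjacent_intervals
    (f := fun t : ℝ ↦ Int.fract t ^ 2 / t ^ 2) (a := fun k : ℕ ↦ (k:ℝ)+1) (n := m)
    (fun k _ => by
      apply aux_interval_int <;> push_cast <;> [linarith [Nat.cast_nonneg (α := ℝ) k]; linarith])
  simp only [Nat.cast_zero, zero_add, Nat.cast_add, Nat.cast_one] at key
  rw [← key]
  refine Finset.sum_congr rfl (fun k _ => ?_)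
  have := aux_step (k+1) (Nat.le_add_left 1 k)
  push_cast at this ⊢
  convert this using 2 <;> ring

lemma integral_Ioi_one :
    ∫ t in Set.Ioi (1:ℝ), Int.fract t ^ 2 / t ^ 2
      = Real.log (2*Real.pi) - Real.eulerMascheroniConstant - 1 := by
  have hb : Tendsto (fun m : ℕ ↦ (m:ℝ)+1) atTop atTop :=
    tendsto_atTop_add_const_right _ 1 tendsto_natCast_atTop_atTop
  have h1 := intervalIntegral_tendsto_integral_Ioi 1 aux_int_Ioi1 hb
  have h2 : Tendsto (fun m : ℕ ↦ ∫ t in (1:ℝ)..((m:ℝ)+1), Int.fract t ^ 2 / t ^ 2) atTop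
      (𝓝 (Real.log (2*Real.pi) - Real.eulerMascheroniConstant - 1)) := by
    simp only [integral_one_to]
    exact tendsto_EE.comp (tendsto_add_atTop_nat 1)
  exact tendsto_nhds_unique h1 h2

/-- `A(1) = ∫_0^∞ {t}²/t² dt = log(2π) - γ`. -/
theorem integral_fract_sq_div_sq :
    ∫ t in Set.Ioi (0:ℝ), Int.fract t ^ 2 / t ^ 2 =
      Real.log (2 * Real.pi) - Real.eulerMascheroniConstant := by
  rw [← Set.Ioc_union_Ioi_eq_Ioi (zero_le_one (α := ℝ)),
    setIntegral_union (Set.Ioc_disjoint_Ioi le_rfl) measurableSet_Ioi aux_int_Ioc01 aux_int_Ioi1,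
    aux_int01, integral_Ioi_one]
  ring
end
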